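/- Let ξ ∈ Z₂ and let u, w be two F-linearly independent Σ-vectors such that the number of one-dimensional 𝔽_q-subspaces ⟨(s,t)⟩ of 𝔽_q² with Q(su + tw) = 0 is exactly 2 (the extended Σ-line span_F{u,w} is secant to Q₀). Then the number of one-dimensional F-subspaces ⟨v⟩ of F⁴ with v ∈ span_F{u, w} and H(v) = 2ξ·Q(v)^{(q+1)/2} is exactly q+1. -/

import Mathlib

/-- `Q(α,β,γ,δ) = αδ - βγ`, the quadratic form of the hyperbolic quadric. -/
def Qf {F : Type*} [Field F] (v : Fin 4 → F) : F := v 0 * v 3 - v 1 * v 2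

/-- `H(α,β,γ,δ) = α^{q+1} - β^{q+1} - γ^{q+1} + δ^{q+1}`, the Hermitian form. -/
def Hf (q : ℕ) {F : Type*} [Field F] (v : Fin 4 → F) : F :=
  v 0 ^ (q + 1) - v 1 ^ (q + 1) - v 2 ^ (q + 1) + v 3 ^ (q + 1)

/-- `v = (α,β,γ,δ)` is nonsingular if `(αz + δ^q z^q)x + (γz + β^q z^q)x^q ≠ 0`
for all nonzero `x, z`. -/
def Nonsingular (q : ℕ) {F : Type*} [Field F] (v : Fin 4 → F) : Prop :=
  ∀ x z : F, x ≠ 0 → z ≠ 0 →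
    (v 0 * z + v 3 ^ q * z ^ q) * x + (v 2 * z + v 1 ^ q * z ^ q) * x ^ q ≠ 0

/-- `Δ(v) = H(v)² - 4·Q(v)^{q+1}`. -/
def Deltaf (q : ℕ) {F : Type*} [Field F] (v : Fin 4 → F) : F :=
  Hf q v ^ 2 - 4 * Qf v ^ (q + 1)

/-- A Σ-vector: a nonzero vector of the form `(α, β, β^q, α^q)`. -/
def IsSigmaVec (q : ℕ) {F : Type*} [Field F] (v : Fin 4 → F) : Prop :=
  v ≠ 0 ∧ ∃ α β : F, v = ![α, β, β ^ q, α ^ q]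

/-- The sesquilinear form `h(u,v) = u₁v₁^q - u₂v₂^q - u₃v₃^q + u₄v₄^q`. -/
def hForm (q : ℕ) {F : Type*} [Field F] (u v : Fin 4 → F) : F :=
  u 0 * v 0 ^ q - u 1 * v 1 ^ q - u 2 * v 2 ^ q + u 3 * v 3 ^ q

/-- The one-dimensional `F`-subspace (as a set) spanned by `v`. -/
def Fline {F : Type*} [Field F] (v : Fin 4 → F) : Set (Fin 4 → F) :=
  {x | ∃ a : F, x = a • v}

/-- The number of one-dimensional `𝔽_q`-subspaces `⟨(s,t)⟩` of `𝔽_q²` with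
`Q(s·u + t·w) = 0`. -/
noncomputable def tangentCount (q : ℕ) {F : Type*} [Field F] (u w : Fin 4 → F) : ℕ :=
  Set.ncard {L : Set (F × F) | ∃ s t : F, s ^ q = s ∧ t ^ q = t ∧ (s, t) ≠ (0, 0) ∧
    Qf (fun i => s * u i + t * w i) = 0 ∧
    L = {p : F × F | ∃ e : F, e ^ q = e ∧ p = (e * s, e * t)}}

/-- `Z₁`: the set of `ξ ∉ {0, 1, -1}` such that `1 - ξ⁻²` is a nonzero square of `𝔽_q`. -/
def Zone (q : ℕ) (F : Type*) [Field F] : Set F :=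
  {ξ | ξ ≠ 0 ∧ ξ ≠ 1 ∧ ξ ≠ -1 ∧ ∃ s : F, s ^ q = s ∧ s ≠ 0 ∧ 1 - (ξ ^ 2)⁻¹ = s ^ 2}

/-- `Z₂`: the set of `ξ ≠ 0` such that `1 - ξ⁻²` is a nonzero nonsquare of `𝔽_q`. -/
def Ztwo (q : ℕ) (F : Type*) [Field F] : Set F :=
  {ξ | ξ ≠ 0 ∧ (1 - (ξ ^ 2)⁻¹) ^ q = 1 - (ξ ^ 2)⁻¹ ∧ 1 - (ξ ^ 2)⁻¹ ≠ 0 ∧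
    ¬∃ s : F, s ^ q = s ∧ 1 - (ξ ^ 2)⁻¹ = s ^ 2}


open Polynomial

lemma ncard_pow_eq_le {F : Type*} [Field F] (n : ℕ) (hn : n ≠ 0) (a : F) :
    Set.ncard {x : F | x ^ n = a} ≤ n := by
  classical
  have hsub : {x : F | x ^ n = a} = ↑(nthRoots n a).toFinset := by
    ext x
    simp [Polynomial.mem_nthRoots (Nat.pos_of_ne_zero hn)]
  rw [hsub, Set.ncard_coe_finset]
  exact le_trans (Multiset.toFinset_card_le _) (Polynomial.card_nthRoots n a)

lemma card_half {F : Type*} [Field F] [Fintype F] (q : ℕ) (hq3 : 3 ≤ q)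
    (hodd : Odd q) (hF : Fintype.card F = q ^ 2)
    (ε : F) (hε : ε = 1 ∨ ε = -1) :
    Set.ncard {T : F | T ^ ((q - 1) / 2) = ε} = (q - 1) / 2 := by
  classical
  obtain ⟨j, hj⟩ := hodd
  set n := (q - 1) / 2 with hn
  have h2n : 2 * n = q - 1 := by omega
  have hn0 : n ≠ 0 := by omega
  set M1 := {T : F | T ^ n = 1} with hM1
  set M2 := {T : F | T ^ n = -1} with hM2
  have hM1le : M1.ncard ≤ n := ncard_pow_eq_le n hn0 1
  have hM2le : M2.ncard ≤ n := ncard_pow_eq_le n hn0 (-1)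
  -- lower bound on the union via the (q+1)-power map
  set s : Finset F := Finset.univ.erase 0 with hs
  set f : F → F := fun x => x ^ (q + 1) with hf
  have hscard : s.card = q ^ 2 - 1 := by
    rw [hs, Finset.card_erase_of_mem (Finset.mem_univ 0), Finset.card_univ, hF]
  have hfib : ∀ b ∈ s.image f, (s.filter fun a => f a = b).card ≤ q + 1 := by
    intro b _
    have hsub2 : (s.filter fun a => f a = b) ⊆ (nthRoots (q + 1) b).toFinset := by
      intro x hx
      rw [Multiset.mem_toFinset, Polynomial.mem_nthRoots (by omega)]
      exact (Finset.mem_filter.mp hx).2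
    calc (s.filter fun a => f a = b).card ≤ (nthRoots (q + 1) b).toFinset.card :=
          Finset.card_le_card hsub2
      _ ≤ Multiset.card (nthRoots (q + 1) b) := Multiset.toFinset_card_le _
      _ ≤ q + 1 := Polynomial.card_nthRoots _ _
  have hmain : s.card ≤ (q + 1) * (s.image f).card :=
    Finset.card_le_mul_card_image s (q + 1) hfib
  have himgsub : ↑(s.image f) ⊆ M1 ∪ M2 := by
    intro x hx
    simp only [Finset.coe_image, Set.mem_image] at hx
    obtain ⟨y, hy, rfl⟩ := hx
    have hy0 : y ≠ 0 := by
      intro h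
      rw [hs] at hy
      simp [h] at hy
    have hpow : (y ^ (q + 1)) ^ n * ((y ^ (q + 1)) ^ n) = 1 := by
      rw [← pow_add, ← pow_mul]
      have : (q + 1) * (n + n) = q ^ 2 - 1 := by
        have hnj : n = j := by omega
        rw [hnj, hj]
        symm
        apply Nat.sub_eq_of_eq_add
        ring
      rw [this, ← hF]
      exact FiniteField.pow_card_sub_one_eq_one y hy0
    rcases mul_self_eq_one_iff.mp hpow with h | h
    · exact Or.inl h
    · exact Or.inr h
  have hle2 : (q:ℕ) - 1 ≤ (s.image f).card := by
    have h1 : (q + 1) * (q - 1) ≤ (q + 1) * (s.image f).card := by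
      calc (q + 1) * (q - 1) = q ^ 2 - 1 := by
            have hq1 : q - 1 = 2 * j := by omega
            rw [hq1, hj]
            symm
            apply Nat.sub_eq_of_eq_add
            ring
        _ = s.card := hscard.symm
        _ ≤ (q + 1) * (s.image f).card := hmain
    exact Nat.le_of_mul_le_mul_left h1 (by omega)
  have hU : q - 1 ≤ (M1 ∪ M2).ncard := by
    calc q - 1 ≤ (s.image f).card := hle2
      _ = (↑(s.image f) : Set F).ncard := (Set.ncard_coe_finset _).symm
      _ ≤ (M1 ∪ M2).ncard := Set.ncard_le_ncard himgsub (Set.toFinite _)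
  have hUle : (M1 ∪ M2).ncard ≤ M1.ncard + M2.ncard := Set.ncard_union_le _ _
  have hM1 : M1.ncard = n ∧ M2.ncard = n := by omega
  rcases hε with rfl | rfl
  · exact hM1.1
  · exact hM1.2

lemma core_count {F : Type*} [Field F] [Fintype F] (q : ℕ) (hq3 : 3 ≤ q) (hodd : Odd q)
    (hF : Fintype.card F = q ^ 2) (hchar : ringChar F ≠ 2) (h2 : (2 : F) ≠ 0)
    (hfrob : ∀ x y : F, (x + y) ^ q = x ^ q + y ^ q)
    (ξ : F) (hξ0 : ξ ≠ 0) (hξq : (1 - (ξ ^ 2)⁻¹) ^ q = 1 - (ξ ^ 2)⁻¹)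
    (hξn0 : 1 - (ξ ^ 2)⁻¹ ≠ 0) (hξns : ¬∃ s : F, s ^ q = s ∧ 1 - (ξ ^ 2)⁻¹ = s ^ 2)
    (c : F) (hc : c ^ 2 = 4 * ξ ^ 2) :
    Set.ncard {r : F | r + r ^ q = c * r ^ ((q + 1) / 2)} = q := by
  classical
  obtain ⟨j, hj⟩ := hodd
  set m := (q + 1) / 2 with hmdef
  set n := (q - 1) / 2 with hndef
  have hm2 : 2 * m = q + 1 := by omega
  have hmn : m = n + 1 := by omega
  have hn2 : 2 * n = q - 1 := by omega
  have hq0 : q ≠ 0 := by omega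
  have hm0 : m ≠ 0 := by omega
  have hn0 : n ≠ 0 := by omega
  have hpowq2 : ∀ x : F, (x ^ q) ^ q = x := by
    intro x
    rw [← pow_mul, ← sq]
    rw [← hF]
    exact FiniteField.pow_card x
  have hsubq : ∀ x y : F, (x - y) ^ q = x ^ q - y ^ q := by
    intro x y
    have h := hfrob (x - y) y
    rw [sub_add_cancel] at h
    linear_combination -h
  have h2q : (2 : F) ^ q = 2 := by
    have h := hfrob 1 1
    norm_num at h
    exact h
  have hw : 2 * (2 : F)⁻¹ = 1 := mul_inv_cancel₀ h2
  have hk0 : (ξ : F) ^ 2 ≠ 0 := pow_ne_zero _ hξ0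
  have h4 : (4 : F) ≠ 0 := by
    have := mul_ne_zero h2 h2
    norm_num at this
    exact this
  have hc0 : c ≠ 0 := by
    intro h
    rw [h] at hc
    simp only [ne_eq, OfNat.ofNat_ne_zero, not_false_eq_true, zero_pow] at hc
    rcases mul_eq_zero.mp hc.symm with h' | h'
    · exact h4 h'
    · exact hk0 h'
  -- find δ with δ² = 1 - (ξ²)⁻¹ and δ^q = -δ
  have hq2odd : q ^ 2 / 2 = (q - 1) * m := by
    have e3 : q ^ 2 = 2 * ((q - 1) * m) + 1 := by
      have e1 : q - 1 = 2 * j := by omega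
      have e2 : m = j + 1 := by omega
      rw [e1, e2, hj]; ring
    rw [e3]
    generalize (q - 1) * m = A
    omega
  have haq1 : (1 - (ξ ^ 2)⁻¹) ^ (q - 1) = 1 := by
    have h' : (1 - (ξ ^ 2)⁻¹) ^ (q - 1) * (1 - (ξ ^ 2)⁻¹) = 1 * (1 - (ξ ^ 2)⁻¹) := by
      rw [one_mul, ← pow_succ]
      have : q - 1 + 1 = q := by omega
      rw [this, hξq]
    exact mul_right_cancel₀ hξn0 h'
  have hsq : IsSquare (1 - (ξ ^ 2)⁻¹) := by
    rw [FiniteField.isSquare_iff hchar hξn0, hF, hq2odd, pow_mul, haq1, one_pow]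
  obtain ⟨δ, hδ0⟩ := hsq
  have hδ : δ ^ 2 = 1 - (ξ ^ 2)⁻¹ := by rw [sq]; exact hδ0.symm
  have hδne : δ ≠ 0 := by
    intro h
    rw [h] at hδ
    simp at hδ
    exact hξn0 hδ.symm
  have hδq : δ ^ q = -δ := by
    have h1 : δ ^ q * δ ^ q = δ * δ := by
      have e : (δ ^ q) ^ 2 = (δ ^ 2) ^ q := by
        rw [← pow_mul, ← pow_mul, mul_comm]
      rw [hδ, hξq, ← hδ] at e
      calc δ ^ q * δ ^ q = (δ ^ q) ^ 2 := (sq _).symm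
        _ = δ ^ 2 := e
        _ = δ * δ := sq δ
    rcases mul_self_eq_mul_self_iff.mp h1 with h | h
    · exact absurd ⟨δ, h, hδ.symm⟩ hξns
    · exact h
  -- the two roots
  set ρ₁ : F := 1 + δ with hρ₁def
  set ρ₂ : F := 1 - δ with hρ₂def
  have hρ1q : ρ₁ ^ q = ρ₂ := by
    rw [hρ₁def, hfrob, one_pow, hδq, hρ₂def]; ring
  have hρ2q : ρ₂ ^ q = ρ₁ := by
    rw [hρ₂def, hsubq, one_pow, hδq, hρ₁def]; ring
  have hρsum : ρ₁ + ρ₂ = 2 := by rw [hρ₁def, hρ₂def]; ring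
  have hρprod : ρ₁ * ρ₂ = (ξ ^ 2)⁻¹ := by
    rw [hρ₁def, hρ₂def]
    linear_combination -hδ
  have hρprod0 : ρ₁ * ρ₂ ≠ 0 := by rw [hρprod]; exact inv_ne_zero hk0
  have hρ1ne : ρ₁ ≠ 0 := fun h => hρprod0 (by rw [h, zero_mul])
  have hρ2ne : ρ₂ ≠ 0 := fun h => hρprod0 (by rw [h, mul_zero])
  have hρne : ρ₁ ≠ ρ₂ := by
    intro h
    rw [hρ₁def, hρ₂def] at h
    apply hδne
    have h2δ : 2 * δ = 0 := by linear_combination h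
    rcases mul_eq_zero.mp h2δ with h' | h'
    · exact absurd h' h2
    · exact h'
  have hkk : ξ ^ 2 * (ρ₁ * ρ₂) = 1 := by rw [hρprod]; exact mul_inv_cancel₀ hk0
  -- the signs
  set ε₁ : F := c * (ρ₁ / 2) ^ m with hε₁def
  set ε₂ : F := c * (ρ₂ / 2) ^ m with hε₂def
  have hεsq : ∀ (ρ ρ' : F), ρ ^ q = ρ' → ξ ^ 2 * (ρ * ρ') = 1 →
      (c * (ρ / 2) ^ m) * (c * (ρ / 2) ^ m) = 1 := by
    intro ρ ρ' hρq hprod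
    have e1 : (ρ / 2) ^ m * (ρ / 2) ^ m = (ρ / 2) ^ q * (ρ / 2) := by
      rw [← pow_add, ← pow_succ]
      congr 1
      omega
    have e2 : (ρ / 2) ^ q = ρ' / 2 := by rw [div_pow, hρq, h2q]
    calc (c * (ρ / 2) ^ m) * (c * (ρ / 2) ^ m)
        = c ^ 2 * ((ρ / 2) ^ m * (ρ / 2) ^ m) := by ring
      _ = 4 * ξ ^ 2 * ((ρ' / 2) * (ρ / 2)) := by rw [e1, e2, hc]
      _ = ξ ^ 2 * (ρ * ρ') := by
          linear_combination (ξ ^ 2 * ρ * ρ' * (2 * (2 : F)⁻¹ + 1)) * hw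
      _ = 1 := hprod
  have hε₁sq : ε₁ * ε₁ = 1 := hεsq ρ₁ ρ₂ hρ1q hkk
  have hε₂sq : ε₂ * ε₂ = 1 := hεsq ρ₂ ρ₁ hρ2q (by rw [mul_comm ρ₂ ρ₁]; exact hkk)
  have hε₁pm : ε₁ = 1 ∨ ε₁ = -1 := mul_self_eq_one_iff.mp hε₁sq
  have hε₂pm : ε₂ = 1 ∨ ε₂ = -1 := mul_self_eq_one_iff.mp hε₂sq
  have hε₁0 : ε₁ ≠ 0 := by rcases hε₁pm with h | h <;> rw [h] <;> simp
  have hε₂0 : ε₂ ≠ 0 := by rcases hε₂pm with h | h <;> rw [h] <;> simp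
  -- the parameter sets
  set C₁ : Set F := {T : F | T ^ n = ε₁} with hC₁def
  set C₂ : Set F := {T : F | T ^ n = ε₂} with hC₂def
  have hC₁card : C₁.ncard = n := card_half q hq3 ⟨j, hj⟩ hF ε₁ hε₁pm
  have hC₂card : C₂.ncard = n := card_half q hq3 ⟨j, hj⟩ hF ε₂ hε₂pm
  -- basic facts about members of C
  have hCfacts : ∀ (ε T : F), ε * ε = 1 → T ^ n = ε → T ≠ 0 ∧ T ^ q = T := by
    intro ε T hε hT
    have hT0 : T ≠ 0 := by
      intro h
      rw [h, zero_pow hn0] at hT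
      rw [← hT] at hε
      simp at hε
    refine ⟨hT0, ?_⟩
    have hTq1 : T ^ (q - 1) = 1 := by
      have : T ^ (q - 1) = T ^ n * T ^ n := by rw [← pow_add]; congr 1; omega
      rw [this, hT, hε]
    have : T ^ q = T ^ (q - 1) * T := by rw [← pow_succ]; congr 1; omega
    rw [this, hTq1, one_mul]
  -- membership calculations
  have hmemval : ∀ (ρ ρ' ε T : F), ρ ^ q = ρ' → ρ + ρ' = 2 → ε = c * (ρ / 2) ^ m →
      ε * ε = 1 → T ^ n = ε →
      (T / 2 * ρ) + (T / 2 * ρ) ^ q = T ∧ c * (T / 2 * ρ) ^ m = T := by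
    intro ρ ρ' ε T hρq hρs hεdef hεsq' hT
    obtain ⟨hT0, hTq⟩ := hCfacts ε T hεsq' hT
    constructor
    · rw [mul_pow, div_pow, hTq, h2q, hρq]
      linear_combination (T * (2 : F)⁻¹) * hρs + T * hw
    · have e1 : (T / 2 * ρ) ^ m = T ^ m * (ρ / 2) ^ m := by
        rw [← mul_pow]
        congr 1
        ring
      have e2 : T ^ m = T ^ n * T := by rw [hmn, pow_succ]
      rw [e1, e2, hT]
      calc c * (ε * T * (ρ / 2) ^ m) = (c * (ρ / 2) ^ m) * ε * T := by ring
        _ = ε * ε * T := by rw [← hεdef]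
        _ = T := by rw [hεsq', one_mul]
  -- the set equality
  have hSeq : {r : F | r + r ^ q = c * r ^ m} =
      insert 0 ((fun T => T / 2 * ρ₁) '' C₁ ∪ (fun T => T / 2 * ρ₂) '' C₂) := by
    ext r
    simp only [Set.mem_setOf_eq, Set.mem_insert_iff, Set.mem_union, Set.mem_image]
    constructor
    · intro hr
      by_cases hr0 : r = 0
      · exact Or.inl hr0
      right
      set T : F := r + r ^ q with hTdef
      have hrm0 : r ^ m ≠ 0 := pow_ne_zero _ hr0
      have hT0 : T ≠ 0 := by rw [hr]; exact mul_ne_zero hc0 hrm0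
      have hT2 : T ^ 2 = 4 * ξ ^ 2 * (r ^ q * r) := by
        calc T ^ 2 = c ^ 2 * (r ^ m * r ^ m) := by rw [hr]; ring
          _ = c ^ 2 * r ^ (q + 1) := by
              rw [← pow_add]
              have : m + m = q + 1 := by omega
              rw [this]
          _ = 4 * ξ ^ 2 * (r ^ q * r) := by rw [hc, pow_succ]; ring
      have hfact : (r - T / 2 * ρ₁) * (r - T / 2 * ρ₂) = 0 := by
        have e5 : ξ ^ 2 * (ξ ^ 2)⁻¹ = 1 := mul_inv_cancel₀ hk0
        linear_combination (-(T * (2:F)⁻¹ * r)) * hρsum + (T ^ 2 * (2:F)⁻¹ ^ 2) * hρprod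
          + ((2:F)⁻¹ ^ 2 * (ξ ^ 2)⁻¹) * hT2 + (4 * r ^ q * r * (2:F)⁻¹ ^ 2) * e5
          + (-(2 * (2:F)⁻¹ * r)) * hTdef + (-(r ^ 2) + 2 * (2:F)⁻¹ * r * r ^ q) * hw
      -- helper to extract membership
      have hside : ∀ (ρ ρ' ε : F), ρ ^ q = ρ' → ε = c * (ρ / 2) ^ m → ε * ε = 1 →
          r = T / 2 * ρ → T ^ n = ε := by
        intro ρ ρ' ε hρq hεdef hεsq' hreq
        have e1 : r ^ m = T ^ m * (ρ / 2) ^ m := by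
          rw [hreq, ← mul_pow]
          congr 1
          ring
        have e2 : T * 1 = T * (T ^ n * ε) := by
          calc T * 1 = c * r ^ m := by rw [mul_one]; exact hr
            _ = T ^ m * (c * (ρ / 2) ^ m) := by rw [e1]; ring
            _ = T ^ m * ε := by rw [← hεdef]
            _ = T ^ n * T * ε := by rw [hmn, pow_succ]
            _ = T * (T ^ n * ε) := by ring
        have e3 : T ^ n * ε = 1 := (mul_left_cancel₀ hT0 e2).symm
        calc T ^ n = T ^ n * (ε * ε) := by rw [hεsq', mul_one]
          _ = (T ^ n * ε) * ε := by ring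
          _ = ε := by rw [e3, one_mul]
      rcases mul_eq_zero.mp hfact with h | h
      · have hreq : r = T / 2 * ρ₁ := by linear_combination h
        exact Or.inl ⟨T, hside ρ₁ ρ₂ ε₁ hρ1q hε₁def hε₁sq hreq, hreq.symm⟩
      · have hreq : r = T / 2 * ρ₂ := by linear_combination h
        exact Or.inr ⟨T, hside ρ₂ ρ₁ ε₂ hρ2q hε₂def hε₂sq hreq, hreq.symm⟩
    · intro hmem
      rcases hmem with rfl | ⟨T, hT, rfl⟩ | ⟨T, hT, rfl⟩
      · rw [zero_pow hq0, zero_pow hm0, add_zero, mul_zero]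
      · obtain ⟨e1, e2⟩ := hmemval ρ₁ ρ₂ ε₁ T hρ1q hρsum hε₁def hε₁sq hT
        rw [e1, e2]
      · obtain ⟨e1, e2⟩ := hmemval ρ₂ ρ₁ ε₂ T hρ2q (by linear_combination hρsum) hε₂def hε₂sq hT
        rw [e1, e2]
  -- counting
  have hzero_notmem : (0 : F) ∉ (fun T => T / 2 * ρ₁) '' C₁ ∪ (fun T => T / 2 * ρ₂) '' C₂ := by
    rintro (⟨T, hT, hTeq⟩ | ⟨T, hT, hTeq⟩)
    · have hT0 := (hCfacts ε₁ T hε₁sq hT).1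
      have hTeq' : T / 2 * ρ₁ = 0 := hTeq
      rcases mul_eq_zero.mp hTeq' with h | h
      · exact hT0 (by rcases div_eq_zero_iff.mp h with h' | h'; exact h'; exact absurd h' h2)
      · exact hρ1ne h
    · have hT0 := (hCfacts ε₂ T hε₂sq hT).1
      have hTeq' : T / 2 * ρ₂ = 0 := hTeq
      rcases mul_eq_zero.mp hTeq' with h | h
      · exact hT0 (by rcases div_eq_zero_iff.mp h with h' | h'; exact h'; exact absurd h' h2)
      · exact hρ2ne h
  have hdisj : Disjoint ((fun T => T / 2 * ρ₁) '' C₁) ((fun T => T / 2 * ρ₂) '' C₂) := by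
    rw [Set.disjoint_left]
    rintro x ⟨T, hT, rfl⟩ ⟨T', hT', heq⟩
    have e1 := (hmemval ρ₁ ρ₂ ε₁ T hρ1q hρsum hε₁def hε₁sq hT).1
    have e2 := (hmemval ρ₂ ρ₁ ε₂ T' hρ2q (by linear_combination hρsum) hε₂def hε₂sq hT').1
    have heq' : T' / 2 * ρ₂ = T / 2 * ρ₁ := heq
    rw [heq'] at e2
    have hTT : T' = T := by rw [← e1, ← e2]
    rw [hTT] at heq'
    have hT0 := (hCfacts ε₁ T hε₁sq hT).1
    have hT20 : T / 2 ≠ 0 := div_ne_zero hT0 h2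
    exact hρne (mul_left_cancel₀ hT20 heq').symm
  have hinjgen : ∀ ρ : F, ρ ≠ 0 → Function.Injective (fun T : F => T / 2 * ρ) := by
    intro ρ hρ a b hab
    have hab' : a / 2 * ρ = b / 2 * ρ := hab
    have h' := mul_right_cancel₀ hρ hab'
    have h'' : a / 2 * 2 = b / 2 * 2 := by rw [h']
    rwa [div_mul_cancel₀ _ h2, div_mul_cancel₀ _ h2] at h''
  have hinj1 := hinjgen ρ₁ hρ1ne
  have hinj2 := hinjgen ρ₂ hρ2ne
  rw [hSeq, Set.ncard_insert_of_notMem hzero_notmem (Set.toFinite _),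
    Set.ncard_union_eq hdisj (Set.toFinite _) (Set.toFinite _),
    Set.ncard_image_of_injective _ hinj1, Set.ncard_image_of_injective _ hinj2,
    hC₁card, hC₂card]
  omega

section helpers

lemma Lset_eq {F : Type*} [Field F] (q : ℕ) (s t e : F) (he : e ^ q = e) (he0 : e ≠ 0) :
    {p : F × F | ∃ e', e' ^ q = e' ∧ p = (e' * (e * s), e' * (e * t))}
      = {p : F × F | ∃ e', e' ^ q = e' ∧ p = (e' * s, e' * t)} := by
  ext pp
  constructor
  · rintro ⟨f, hf, rfl⟩
    exact ⟨f * e, by rw [mul_pow, hf, he], by rw [Prod.mk.injEq]; constructor <;> ring⟩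
  · rintro ⟨f, hf, rfl⟩
    refine ⟨f / e, by rw [div_pow, hf, he], ?_⟩
    rw [Prod.mk.injEq]
    constructor <;> (field_simp; try ring)

lemma QH_formula {F : Type*} [Field F] (q : ℕ)
    (hfrob : ∀ x y : F, (x + y) ^ q = x ^ q + y ^ q)
    (hpow2 : ∀ x : F, (x ^ q) ^ q = x)
    (a1 b1 a2 b2 : F) (h1 : a1 * a1 ^ q - b1 * b1 ^ q = 0)
    (h2 : a2 * a2 ^ q - b2 * b2 ^ q = 0) (s t : F) :
    Qf (s • ![a1, b1, b1 ^ q, a1 ^ q] + t • ![a2, b2, b2 ^ q, a2 ^ q])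
      = (a1 * a2 ^ q + a1 ^ q * a2 - b1 * b2 ^ q - b1 ^ q * b2) * (s * t) ∧
    Hf q (s • ![a1, b1, b1 ^ q, a1 ^ q] + t • ![a2, b2, b2 ^ q, a2 ^ q])
      = (a1 * a2 ^ q + a1 ^ q * a2 - b1 * b2 ^ q - b1 ^ q * b2) * (s * t ^ q + s ^ q * t) := by
  have e0 : (s • ![a1, b1, b1 ^ q, a1 ^ q] + t • ![a2, b2, b2 ^ q, a2 ^ q]) 0
      = s * a1 + t * a2 := rfl
  have e1 : (s • ![a1, b1, b1 ^ q, a1 ^ q] + t • ![a2, b2, b2 ^ q, a2 ^ q]) 1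
      = s * b1 + t * b2 := rfl
  have e2 : (s • ![a1, b1, b1 ^ q, a1 ^ q] + t • ![a2, b2, b2 ^ q, a2 ^ q]) 2
      = s * b1 ^ q + t * b2 ^ q := rfl
  have e3 : (s • ![a1, b1, b1 ^ q, a1 ^ q] + t • ![a2, b2, b2 ^ q, a2 ^ q]) 3
      = s * a1 ^ q + t * a2 ^ q := rfl
  have E : ∀ x y u v : F, (x * u + y * v) ^ q = x ^ q * u ^ q + y ^ q * v ^ q := by
    intro x y u v
    rw [hfrob, mul_pow, mul_pow]
  constructor
  · rw [Qf, e0, e1, e2, e3]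
    linear_combination s ^ 2 * h1 + t ^ 2 * h2
  · rw [Hf, e0, e1, e2, e3, pow_succ, pow_succ, pow_succ, pow_succ, E, E, E, E,
      hpow2 a1, hpow2 a2, hpow2 b1, hpow2 b2]
    linear_combination (2 * s ^ q * s) * h1 + (2 * t ^ q * t) * h2

lemma Fline_smul {F : Type*} [Field F] (x : Fin 4 → F) {a : F} (ha : a ≠ 0) :
    Fline (a • x) = Fline x := by
  ext y
  constructor
  · rintro ⟨c, rfl⟩
    exact ⟨c * a, (smul_smul c a x)⟩
  · rintro ⟨c, rfl⟩
    refine ⟨c / a, ?_⟩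
    rw [smul_smul, div_mul_cancel₀ _ ha]

lemma mem_Fline_self {F : Type*} [Field F] (x : Fin 4 → F) : x ∈ Fline x :=
  ⟨1, (one_smul F x).symm⟩

end helpers


/-- An extended `Σ`-line secant to `Q₀` meets the surface `S_ξ`, `ξ ∈ Z₂`, in exactly
`q+1` points. -/
theorem stmt17 (q : ℕ) (hq : ∃ p k : ℕ, p.Prime ∧ 0 < k ∧ q = p ^ k) (hodd : Odd q)
    (F : Type*) [Field F] [Fintype F] (hF : Fintype.card F = q ^ 2)
    (ξ : F) (hξ : ξ ∈ Ztwo q F)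
    (u w : Fin 4 → F) (hu : IsSigmaVec q u) (hw : IsSigmaVec q w)
    (hind : LinearIndependent F ![u, w])
    (hsec : tangentCount q u w = 2) :
    Set.ncard {L : Set (Fin 4 → F) | ∃ v : Fin 4 → F, v ≠ 0 ∧
      v ∈ Submodule.span F {u, w} ∧
      Hf q v = 2 * ξ * Qf v ^ ((q + 1) / 2) ∧ L = Fline v} = q + 1 := by
    classical
  obtain ⟨ξne, hξq, hξn0, hξns⟩ := hξ
  obtain ⟨p, kk, hp, hkk, hqpk⟩ := hq
  haveI hfct : Fact p.Prime := ⟨hp⟩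
  -- basic arithmetic facts
  have hpodd : p ≠ 2 := by
    rintro rfl
    have heven : Even (2 ^ kk) := (Nat.even_pow).mpr ⟨even_two, by omega⟩
    rw [← hqpk] at heven
    exact (Nat.not_even_iff_odd.mpr hodd) heven
  have hp3 : 3 ≤ p := by have := hp.two_le; omega
  have hq3 : 3 ≤ q := by
    have h1 : p ≤ p ^ kk := Nat.le_self_pow (by omega) p
    omega
  obtain ⟨j, hj⟩ := hodd
  have hq0 : q ≠ 0 := by omega
  -- characteristic
  have hrc : ringChar F = p := by
    obtain ⟨nn, hrprime, hcard⟩ := FiniteField.card F (ringChar F)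
    have hdvd : ringChar F ∣ p ^ (2 * kk) := by
      have hcard2 : Fintype.card F = p ^ (2 * kk) := by
        rw [hF, hqpk, ← pow_mul, mul_comm]
      rw [hcard2] at hcard
      rw [hcard]
      exact dvd_pow_self _ (by positivity)
    exact (Nat.prime_dvd_prime_iff_eq hrprime hp).mp (hrprime.dvd_of_dvd_pow hdvd)
  haveI hcharp : CharP F p := by rw [← hrc]; exact ringChar.charP F
  have hchar2 : ringChar F ≠ 2 := by rw [hrc]; omega
  have h2F : (2 : F) ≠ 0 := Ring.two_ne_zero hchar2
  have hfrob : ∀ x y : F, (x + y) ^ q = x ^ q + y ^ q := by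
    intro x y
    rw [hqpk]
    exact add_pow_char_pow x y p kk
  have hsubq : ∀ x y : F, (x - y) ^ q = x ^ q - y ^ q := by
    intro x y
    have h := hfrob (x - y) y
    rw [sub_add_cancel] at h
    linear_combination -h
  have hpowq2 : ∀ x : F, (x ^ q) ^ q = x := by
    intro x
    rw [← pow_mul]
    have e : q * q = q ^ 2 := (sq q).symm
    rw [e, ← hF]
    exact FiniteField.pow_card x
  -- the exponents
  set mm := (q + 1) / 2 with hmmdef
  set nn := (q - 1) / 2 with hnndef
  have hmn : mm = nn + 1 := by omega
  have hmm2 : 2 * mm = q + 1 := by omega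
  have hnn2 : 2 * nn = q - 1 := by omega
  have hmm0 : mm ≠ 0 := by omega
  -- extract the two tangent directions
  unfold tangentCount at hsec
  rw [Set.ncard_eq_two] at hsec
  obtain ⟨X, Y, hXY, hset⟩ := hsec
  have hX : X ∈ ({X, Y} : Set (Set (F × F))) := Set.mem_insert _ _
  have hY : Y ∈ ({X, Y} : Set (Set (F × F))) := Set.mem_insert_iff.mpr (Or.inr rfl)
  rw [← hset] at hX hY
  obtain ⟨s₁, t₁, hs₁, ht₁, hd₁, hQ₁, hXeq⟩ := hX
  obtain ⟨s₂, t₂, hs₂, ht₂, hd₂, hQ₂, hYeq⟩ := hY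
  obtain ⟨hune, α₁, β₁, huv⟩ := hu
  obtain ⟨hwne, α₂, β₂, hwv⟩ := hw
  -- Frobenius on the combined coordinates
  have Ea1 : (s₁ * α₁ + t₁ * α₂) ^ q = s₁ * α₁ ^ q + t₁ * α₂ ^ q := by
    rw [hfrob, mul_pow, mul_pow, hs₁, ht₁]
  have Eb1 : (s₁ * β₁ + t₁ * β₂) ^ q = s₁ * β₁ ^ q + t₁ * β₂ ^ q := by
    rw [hfrob, mul_pow, mul_pow, hs₁, ht₁]
  have Ea2 : (s₂ * α₁ + t₂ * α₂) ^ q = s₂ * α₁ ^ q + t₂ * α₂ ^ q := by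
    rw [hfrob, mul_pow, mul_pow, hs₂, ht₂]
  have Eb2 : (s₂ * β₁ + t₂ * β₂) ^ q = s₂ * β₁ ^ q + t₂ * β₂ ^ q := by
    rw [hfrob, mul_pow, mul_pow, hs₂, ht₂]
  -- the tangency conditions in coordinates
  have hQval : ∀ s t : F, Qf (fun i => s * u i + t * w i)
      = (s * α₁ + t * α₂) * (s * α₁ ^ q + t * α₂ ^ q)
        - (s * β₁ + t * β₂) * (s * β₁ ^ q + t * β₂ ^ q) := by
    intro s t
    rw [huv, hwv, Qf]
    rfl
  have h1 : (s₁ * α₁ + t₁ * α₂) * (s₁ * α₁ + t₁ * α₂) ^ q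
      - (s₁ * β₁ + t₁ * β₂) * (s₁ * β₁ + t₁ * β₂) ^ q = 0 := by
    rw [Ea1, Eb1, ← hQval s₁ t₁]
    exact hQ₁
  have h2 : (s₂ * α₁ + t₂ * α₂) * (s₂ * α₁ + t₂ * α₂) ^ q
      - (s₂ * β₁ + t₂ * β₂) * (s₂ * β₁ + t₂ * β₂) ^ q = 0 := by
    rw [Ea2, Eb2, ← hQval s₂ t₂]
    exact hQ₂
  -- the new basis vectors
  obtain ⟨U, hUdef⟩ : ∃ U : Fin 4 → F, U = ![s₁ * α₁ + t₁ * α₂, s₁ * β₁ + t₁ * β₂,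
    (s₁ * β₁ + t₁ * β₂) ^ q, (s₁ * α₁ + t₁ * α₂) ^ q] := ⟨_, rfl⟩
  obtain ⟨W, hWdef⟩ : ∃ W : Fin 4 → F, W = ![s₂ * α₁ + t₂ * α₂, s₂ * β₁ + t₂ * β₂,
    (s₂ * β₁ + t₂ * β₂) ^ q, (s₂ * α₁ + t₂ * α₂) ^ q] := ⟨_, rfl⟩
  have hUsm : U = s₁ • u + t₁ • w := by
    rw [hUdef, huv, hwv]
    clear hUdef
    funext i
    fin_cases i
    · rfl
    · rfl
    · exact Eb1
    · exact Ea1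
  have hWsm : W = s₂ • u + t₂ • w := by
    rw [hWdef, huv, hwv]
    funext i
    fin_cases i
    · rfl
    · rfl
    · exact Eb2
    · exact Ea2
  obtain ⟨B, hBdef⟩ : ∃ B : F, B = (s₁ * α₁ + t₁ * α₂) * (s₂ * α₁ + t₂ * α₂) ^ q
      + (s₁ * α₁ + t₁ * α₂) ^ q * (s₂ * α₁ + t₂ * α₂)
      - (s₁ * β₁ + t₁ * β₂) * (s₂ * β₁ + t₂ * β₂) ^ q
      - (s₁ * β₁ + t₁ * β₂) ^ q * (s₂ * β₁ + t₂ * β₂) := ⟨_, rfl⟩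
  have QH : ∀ s t : F, Qf (s • U + t • W) = B * (s * t) ∧
      Hf q (s • U + t • W) = B * (s * t ^ q + s ^ q * t) := by
    rw [hUdef, hWdef, hBdef]
    exact fun s t => QH_formula q hfrob hpowq2 _ _ _ _ h1 h2 s t
  -- independence of the directions
  have hD : s₁ * t₂ - s₂ * t₁ ≠ 0 := by
    intro hD0
    apply hXY
    rw [hXeq, hYeq]
    by_cases hs10 : s₁ = 0
    · have ht10 : t₁ ≠ 0 := by
        intro h
        exact hd₁ (by rw [hs10, h])
      have hs20 : s₂ = 0 := by
        have : s₂ * t₁ = 0 := by linear_combination -hD0 + t₂ * hs10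
        rcases mul_eq_zero.mp this with h | h
        · exact h
        · exact absurd h ht10
      have ht20 : t₂ ≠ 0 := by
        intro h
        exact hd₂ (by rw [hs20, h])
      have he : (t₂ / t₁) ^ q = t₂ / t₁ := by rw [div_pow, ht₂, ht₁]
      have he0 : t₂ / t₁ ≠ 0 := div_ne_zero ht20 ht10
      have hs2e : s₂ = t₂ / t₁ * s₁ := by rw [hs10, hs20, mul_zero]
      have ht2e : t₂ = t₂ / t₁ * t₁ := by field_simp
      have key := (Lset_eq q s₁ t₁ (t₂ / t₁) he he0).symm
      rw [← hs2e, ← ht2e] at key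
      exact key
    · have hs20 : s₂ ≠ 0 := by
        intro h
        have ht20 : t₂ = 0 := by
          have : s₁ * t₂ = 0 := by linear_combination hD0 + t₁ * h
          rcases mul_eq_zero.mp this with h' | h'
          · exact absurd h' hs10
          · exact h'
        exact hd₂ (by rw [h, ht20])
      have he : (s₂ / s₁) ^ q = s₂ / s₁ := by rw [div_pow, hs₂, hs₁]
      have he0 : s₂ / s₁ ≠ 0 := div_ne_zero hs20 hs10
      have hs2e : s₂ = s₂ / s₁ * s₁ := by field_simp
      have ht2e : t₂ = s₂ / s₁ * t₁ := by
        field_simp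
        linear_combination hD0
      have key := (Lset_eq q s₁ t₁ (s₂ / s₁) he he0).symm
      rw [← hs2e, ← ht2e] at key
      exact key
  -- linear independence of U, W
  have hpair := LinearIndependent.pair_iff.mp hind
  have hUW : ∀ a b : F, a • U + b • W = 0 → a = 0 ∧ b = 0 := by
    intro a b hab
    have h' : (a * s₁ + b * s₂) • u + (a * t₁ + b * t₂) • w = 0 := by
      rw [hUsm, hWsm] at hab
      funext i
      have := congrFun hab i
      simp only [Pi.add_apply, Pi.smul_apply, smul_eq_mul, Pi.zero_apply] at this ⊢
      linear_combination this
    obtain ⟨e1, e2⟩ := hpair _ _ h'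
    constructor
    · have h'' : a * (s₁ * t₂ - s₂ * t₁) = 0 := by linear_combination t₂ * e1 - s₂ * e2
      rcases mul_eq_zero.mp h'' with h | h
      · exact h
      · exact absurd h hD
    · have h'' : b * (s₁ * t₂ - s₂ * t₁) = 0 := by linear_combination s₁ * e2 - t₁ * e1
      rcases mul_eq_zero.mp h'' with h | h
      · exact h
      · exact absurd h hD
  have hUne : U ≠ 0 := by
    intro h
    have h0 : (1 : F) • U + (0 : F) • W = 0 := by rw [h]; simp
    exact one_ne_zero (hUW 1 0 h0).1
  -- span equality
  have hspan : Submodule.span F {u, w} = Submodule.span F {U, W} := by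
    apply le_antisymm
    · rw [Submodule.span_le]
      intro x hx
      simp only [Set.mem_insert_iff, Set.mem_singleton_iff] at hx
      rcases hx with rfl | rfl
      · refine Submodule.mem_span_pair.mpr
          ⟨t₂ / (s₁ * t₂ - s₂ * t₁), -(t₁ / (s₁ * t₂ - s₂ * t₁)), ?_⟩
        rw [hUsm, hWsm]
        funext i
        simp only [Pi.add_apply, Pi.smul_apply, smul_eq_mul]
        linear_combination (x i) * mul_inv_cancel₀ hD
      · refine Submodule.mem_span_pair.mpr
          ⟨-(s₂ / (s₁ * t₂ - s₂ * t₁)), s₁ / (s₁ * t₂ - s₂ * t₁), ?_⟩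
        rw [hUsm, hWsm]
        funext i
        simp only [Pi.add_apply, Pi.smul_apply, smul_eq_mul]
        linear_combination (x i) * mul_inv_cancel₀ hD
    · rw [Submodule.span_le]
      intro x hx
      simp only [Set.mem_insert_iff, Set.mem_singleton_iff] at hx
      rcases hx with rfl | rfl
      · exact Submodule.mem_span_pair.mpr ⟨s₁, t₁, hUsm.symm⟩
      · exact Submodule.mem_span_pair.mpr ⟨s₂, t₂, hWsm.symm⟩
  -- B is nonzero
  have hBq : B ^ q = B := by
    rw [hBdef]
    calc ((s₁ * α₁ + t₁ * α₂) * (s₂ * α₁ + t₂ * α₂) ^ q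
        + (s₁ * α₁ + t₁ * α₂) ^ q * (s₂ * α₁ + t₂ * α₂)
        - (s₁ * β₁ + t₁ * β₂) * (s₂ * β₁ + t₂ * β₂) ^ q
        - (s₁ * β₁ + t₁ * β₂) ^ q * (s₂ * β₁ + t₂ * β₂)) ^ q
        = ((s₁ * α₁ + t₁ * α₂) * (s₂ * α₁ + t₂ * α₂) ^ q) ^ q
        + ((s₁ * α₁ + t₁ * α₂) ^ q * (s₂ * α₁ + t₂ * α₂)) ^ q
        - ((s₁ * β₁ + t₁ * β₂) * (s₂ * β₁ + t₂ * β₂) ^ q) ^ q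
        - ((s₁ * β₁ + t₁ * β₂) ^ q * (s₂ * β₁ + t₂ * β₂)) ^ q := by
          rw [hsubq, hsubq, hfrob]
      _ = _ := by
          rw [mul_pow, mul_pow, mul_pow, mul_pow, hpowq2, hpowq2, hpowq2, hpowq2]
          ring
  have hB : B ≠ 0 := by
    intro hB0
    -- third tangent direction
    have hs₃ : (s₁ + s₂) ^ q = s₁ + s₂ := by rw [hfrob, hs₁, hs₂]
    have ht₃ : (t₁ + t₂) ^ q = t₁ + t₂ := by rw [hfrob, ht₁, ht₂]
    have hd₃ : ((s₁ + s₂ : F), (t₁ + t₂ : F)) ≠ (0, 0) := by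
      intro h
      rw [Prod.mk.injEq] at h
      apply hD
      have e1 : s₂ = -s₁ := by linear_combination h.1
      have e2 : t₂ = -t₁ := by linear_combination h.2
      rw [e1, e2]
      ring
    have hQ₃ : Qf (fun i => (s₁ + s₂) * u i + (t₁ + t₂) * w i) = 0 := by
      have hv3 : (fun i => (s₁ + s₂) * u i + (t₁ + t₂) * w i)
          = (1 : F) • U + (1 : F) • W := by
        funext i
        rw [hUsm, hWsm]
        simp only [Pi.add_apply, Pi.smul_apply, smul_eq_mul]
        ring
      rw [hv3, (QH 1 1).1, hB0, zero_mul]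
    have hL3 : ({p : F × F | ∃ e : F, e ^ q = e ∧ p = (e * (s₁ + s₂), e * (t₁ + t₂))})
        ∈ ({X, Y} : Set (Set (F × F))) := by
      rw [← hset]
      exact ⟨s₁ + s₂, t₁ + t₂, hs₃, ht₃, hd₃, hQ₃, rfl⟩
    have hmem3 : ((s₁ + s₂ : F), (t₁ + t₂ : F))
        ∈ {p : F × F | ∃ e : F, e ^ q = e ∧ p = (e * (s₁ + s₂), e * (t₁ + t₂))} :=
      ⟨1, one_pow q, by rw [one_mul, one_mul]⟩
    rcases hL3 with h3 | h3
    · rw [h3, hXeq] at hmem3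
      obtain ⟨e, he, hee⟩ := hmem3
      rw [Prod.mk.injEq] at hee
      apply hD
      have e1 : s₂ = (e - 1) * s₁ := by linear_combination hee.1
      have e2 : t₂ = (e - 1) * t₁ := by linear_combination hee.2
      rw [e1, e2]
      ring
    · rw [h3, hYeq] at hmem3
      obtain ⟨e, he, hee⟩ := hmem3
      rw [Prod.mk.injEq] at hee
      apply hD
      have e1 : s₁ = (e - 1) * s₂ := by linear_combination hee.1
      have e2 : t₁ = (e - 1) * t₂ := by linear_combination hee.2
      rw [e1, e2]
      ring
  -- the scalar c and the core count
  have hBq1 : B ^ (q - 1) = 1 := by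
    have h' : B ^ (q - 1) * B = 1 * B := by
      rw [one_mul, ← pow_succ]
      have e : q - 1 + 1 = q := by omega
      rw [e, hBq]
    exact mul_right_cancel₀ hB h'
  have hc : (2 * ξ * B ^ nn) ^ 2 = 4 * ξ ^ 2 := by
    have e : B ^ nn * B ^ nn = B ^ (q - 1) := by
      rw [← pow_add]
      congr 1
      omega
    calc (2 * ξ * B ^ nn) ^ 2 = 4 * ξ ^ 2 * (B ^ nn * B ^ nn) := by ring
      _ = 4 * ξ ^ 2 := by rw [e, hBq1, mul_one]
  have hcount : Set.ncard {r : F | r + r ^ q = (2 * ξ * B ^ nn) * r ^ mm} = q :=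
    core_count q hq3 ⟨j, hj⟩ hF hchar2 h2F hfrob ξ ξne hξq hξn0 hξns (2 * ξ * B ^ nn) hc
  -- the key bijection
  have hkey : {L : Set (Fin 4 → F) | ∃ v : Fin 4 → F, v ≠ 0 ∧
      v ∈ Submodule.span F {u, w} ∧
      Hf q v = 2 * ξ * Qf v ^ mm ∧ L = Fline v}
      = insert (Fline U) ((fun r => Fline (r • U + W)) ''
          {r : F | r + r ^ q = (2 * ξ * B ^ nn) * r ^ mm}) := by
    ext L
    simp only [Set.mem_setOf_eq, Set.mem_insert_iff, Set.mem_image]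
    constructor
    · rintro ⟨v, hv0, hvsp, hvH, rfl⟩
      rw [hspan] at hvsp
      obtain ⟨s, t, hst⟩ := Submodule.mem_span_pair.mp hvsp
      by_cases ht0 : t = 0
      · left
        have hsU : s • U = v := by rw [← hst, ht0]; simp
        have hs0 : s ≠ 0 := by
          rintro rfl
          rw [zero_smul] at hsU
          exact hv0 hsU.symm
        rw [← hsU, Fline_smul U hs0]
      · right
        refine ⟨s / t, ?_, ?_⟩
        · -- membership in the parameter set
          rw [← hst, (QH s t).1, (QH s t).2] at hvH
          have key : s * t ^ q + s ^ q * t = 2 * ξ * B ^ nn * (s ^ mm * t ^ mm) := by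
            apply mul_left_cancel₀ hB
            rw [hmn] at hvH ⊢
            linear_combination hvH
          have htq0 : t ^ q ≠ 0 := pow_ne_zero _ ht0
          have htqt : t ^ q * t ≠ 0 := mul_ne_zero htq0 ht0
          apply mul_right_cancel₀ htqt
          have eL1 : s / t * (t ^ q * t) = s * t ^ q := by
            rw [mul_comm (t ^ q) t, ← mul_assoc, div_mul_cancel₀ _ ht0]
          have eL2 : s ^ q / t ^ q * (t ^ q * t) = s ^ q * t := by
            rw [← mul_assoc, div_mul_cancel₀ _ htq0]
          have eL : (s / t + (s / t) ^ q) * (t ^ q * t) = s * t ^ q + s ^ q * t := by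
            calc (s / t + (s / t) ^ q) * (t ^ q * t)
                = s / t * (t ^ q * t) + s ^ q / t ^ q * (t ^ q * t) := by rw [div_pow]; ring
              _ = s * t ^ q + s ^ q * t := by rw [eL1, eL2]
          have htmm0 : t ^ mm ≠ 0 := pow_ne_zero _ ht0
          have htt : t ^ q * t = t ^ mm * t ^ mm := by
            rw [← pow_add, ← pow_succ]
            congr 1
            omega
          have eR : ((2 * ξ * B ^ nn) * (s / t) ^ mm) * (t ^ q * t)
              = 2 * ξ * B ^ nn * (s ^ mm * t ^ mm) := by
            rw [div_pow, htt, mul_assoc, ← mul_assoc (s ^ mm / t ^ mm),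
              div_mul_cancel₀ _ htmm0]
          rw [eL, eR]
          exact key
        · -- the lines agree
          have hts : t * (s / t) = s := by
            rw [mul_comm, div_mul_cancel₀ _ ht0]
          have hv : v = t • ((s / t) • U + W) := by
            rw [← hst]
            funext i
            simp only [Pi.add_apply, Pi.smul_apply, smul_eq_mul]
            linear_combination (-(U i)) * hts
          rw [hv, Fline_smul _ ht0]
    · rintro (rfl | ⟨r, hr, rfl⟩)
      · refine ⟨U, hUne, by rw [hspan]; exact Submodule.mem_span_pair.mpr ⟨1, 0, by simp⟩,
          ?_, rfl⟩
        have hU11 : U = (1 : F) • U + (0 : F) • W := by simp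
        rw [hU11, (QH 1 0).1, (QH 1 0).2]
        simp [zero_pow hq0, zero_pow hmm0]
      · have hr' : r + r ^ q = (2 * ξ * B ^ nn) * r ^ mm := hr
        refine ⟨r • U + W, ?_, ?_, ?_, rfl⟩
        · intro h
          have h0 : r • U + (1 : F) • W = 0 := by rw [one_smul]; exact h
          exact one_ne_zero (hUW r 1 h0).2
        · rw [hspan]
          exact Submodule.mem_span_pair.mpr ⟨r, 1, by rw [one_smul]⟩
        · have hv1 : r • U + W = r • U + (1 : F) • W := by rw [one_smul]
          rw [hv1, (QH r 1).1, (QH r 1).2]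
          simp only [one_pow, mul_one]
          rw [hr', hmn]
          ring
  -- injectivity and counting
  have hΦinj : Function.Injective (fun r : F => Fline (r • U + W)) := by
    intro r1 r2 h
    have h' : Fline (r1 • U + W) = Fline (r2 • U + W) := h
    have hmem : r2 • U + W ∈ Fline (r1 • U + W) := by
      rw [h']
      exact mem_Fline_self _
    obtain ⟨a, ha⟩ := hmem
    have h0 : (r2 - a * r1) • U + (1 - a) • W = 0 := by
      funext i
      have hai := congrFun ha i
      simp only [Pi.add_apply, Pi.smul_apply, smul_eq_mul, Pi.zero_apply] at hai ⊢
      linear_combination hai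
    obtain ⟨e1, e2⟩ := hUW _ _ h0
    linear_combination -e1 + r1 * e2
  have hnotmem : Fline U ∉ (fun r : F => Fline (r • U + W)) ''
      {r : F | r + r ^ q = (2 * ξ * B ^ nn) * r ^ mm} := by
    rintro ⟨r, _, heq⟩
    have heq' : Fline (r • U + W) = Fline U := heq
    have hmem : U ∈ Fline (r • U + W) := by
      rw [heq']
      exact mem_Fline_self U
    obtain ⟨a, ha⟩ := hmem
    have h0 : (1 - a * r) • U + (-a) • W = 0 := by
      funext i
      have hai := congrFun ha i
      simp only [Pi.add_apply, Pi.smul_apply, smul_eq_mul, Pi.zero_apply] at hai ⊢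
      linear_combination hai
    obtain ⟨e1, e2⟩ := hUW _ _ h0
    have ha0 : a = 0 := by linear_combination -e2
    rw [ha0] at e1
    simp at e1
  rw [hkey, Set.ncard_insert_of_notMem hnotmem (Set.toFinite _),
    Set.ncard_image_of_injective _ hΦinj, hcount]
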